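/- Let δ : [0,∞) → ℝ be the solution of the scalar ODE δ̇(t) = (2/3) sin(δ(t)) (1/2 − cos(δ(t))) with initial datum δ(0) = δ₀ ∈ [0,π]. Then: if δ₀ ∈ [0,π/3), δ(t) → 0 as t → ∞; if δ₀ = π/3, δ(t) = π/3 for all t; and if δ₀ ∈ (π/3,π], δ(t) → π as t → ∞. -/

import Mathlib

open Filter Real Set

namespace KuramotoAux

noncomputable def F (x : ℝ) : ℝ := (2/3) * Real.sin x * (1/2 - Real.cos x)

lemma hasDerivAt_F (x : ℝ) :
    HasDerivAt F ((2/3) * (Real.cos x * (1/2 - Real.cos x) + Real.sin x * Real.sin x)) x := by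
  have h1 : HasDerivAt (fun y => (1/2 : ℝ) - Real.cos y) (Real.sin x) x := by
    simpa using (Real.hasDerivAt_cos x).const_sub (1/2 : ℝ)
  have h2 := (Real.hasDerivAt_sin x).mul h1
  have h3 := h2.const_mul (2/3 : ℝ)
  have hF : F = fun y => (2/3) * (Real.sin y * (1/2 - Real.cos y)) := by
    funext y; unfold F; ring
  rw [hF]
  exact h3

lemma F_cont : Continuous F := by
  unfold F; continuity

lemma lipF : LipschitzWith 1 F := by
  apply lipschitzWith_of_nnnorm_deriv_le (fun x => (hasDerivAt_F x).differentiableAt)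
  intro x
  have hd : deriv F x = (2/3) * (Real.cos x * (1/2 - Real.cos x) + Real.sin x * Real.sin x) :=
    (hasDerivAt_F x).deriv
  have : ‖deriv F x‖ ≤ (1 : ℝ) := by
    rw [hd, Real.norm_eq_abs, abs_le]
    have h1 := Real.sin_sq_add_cos_sq x
    have h2 := Real.neg_one_le_cos x
    have h3 := Real.cos_le_one x
    constructor <;> nlinarith [sq_nonneg (Real.cos x - 1/8), sq_nonneg (Real.cos x + 1)]
  exact_mod_cast this

lemma F_zero : F 0 = 0 := by simp [F]

lemma F_pi : F π = 0 := by simp [F]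

lemma F_pi_div_three : F (π/3) = 0 := by simp [F, Real.cos_pi_div_three]

section Sol

variable {δ : ℝ → ℝ} (hode : ∀ t ≥ (0:ℝ), HasDerivAt δ (F (δ t)) t)

include hode

lemma contOn : ContinuousOn δ (Ici 0) :=
  fun s hs => (hode s hs).continuousAt.continuousWithinAt

/-- Forward uniqueness against a constant equilibrium. -/
lemma eq_const_forward {c : ℝ} (hc : F c = 0) (h0 : δ 0 = c) : ∀ t ≥ (0:ℝ), δ t = c := by
  intro t ht
  have key := ODE_solution_unique (v := fun _ x => F x) (K := 1) (f := δ) (g := fun _ => c)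
    (a := 0) (b := t) (fun _ => lipF)
    (fun s hs => (hode s hs.1).continuousAt.continuousWithinAt)
    (fun s hs => (hode s hs.1).hasDerivWithinAt)
    continuousOn_const
    (fun s _ => by simpa [hc] using (hasDerivAt_const s c).hasDerivWithinAt)
    h0
  exact key ⟨ht, le_refl t⟩

/-- Backward uniqueness against a constant equilibrium. -/
lemma eq_const_backward {c : ℝ} (hc : F c = 0) {t₁ : ℝ} (ht₁ : 0 ≤ t₁) (h : δ t₁ = c) :
    δ 0 = c := by
  have key := ODE_solution_unique_of_mem_Icc_left (v := fun _ x => F x)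
    (s := fun _ => (univ : Set ℝ)) (K := 1) (f := δ) (g := fun _ => c) (a := 0) (b := t₁)
    (fun _ _ => lipF.lipschitzOnWith)
    (fun s hs => (hode s hs.1).continuousAt.continuousWithinAt)
    (fun s hs => (hode s hs.1.le).hasDerivWithinAt)
    (fun _ _ => trivial)
    continuousOn_const
    (fun s _ => by simpa [hc] using (hasDerivAt_const s c).hasDerivWithinAt)
    (fun _ _ => trivial)
    h
  exact key ⟨le_refl 0, ht₁⟩

lemma ne_const {c : ℝ} (hc : F c = 0) (h0 : δ 0 ≠ c) : ∀ t ≥ (0:ℝ), δ t ≠ c :=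
  fun t ht h => h0 (eq_const_backward hode hc ht h)

lemma stays_below {c : ℝ} (hc : F c = 0) (h0 : δ 0 < c) : ∀ t ≥ (0:ℝ), δ t < c := by
  intro t ht
  by_contra h
  push_neg at h
  have hmem : c ∈ δ '' Icc 0 t :=
    intermediate_value_Icc ht ((contOn hode).mono (Icc_subset_Ici_self)) ⟨h0.le, h⟩
  obtain ⟨s, hs, hsc⟩ := hmem
  exact ne_const hode hc h0.ne s hs.1 hsc

lemma stays_above {c : ℝ} (hc : F c = 0) (h0 : c < δ 0) : ∀ t ≥ (0:ℝ), c < δ t := by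
  intro t ht
  by_contra h
  push_neg at h
  have hmem : c ∈ δ '' Icc 0 t :=
    intermediate_value_Icc' ht ((contOn hode).mono (Icc_subset_Ici_self)) ⟨h, h0.le⟩
  obtain ⟨s, hs, hsc⟩ := hmem
  exact ne_const hode hc h0.ne' s hs.1 hsc

/-- Any limit of a solution at `atTop` is an equilibrium of `F`. -/
lemma F_limit_eq_zero {L : ℝ} (hL : Tendsto δ atTop (nhds L)) : F L = 0 := by
  have key : ∀ t ≥ (0:ℝ), ∃ c ∈ Ioo t (t+1), F (δ c) = δ (t+1) - δ t := by
    intro t ht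
    have hlt : t < t + 1 := by linarith
    obtain ⟨c, hc, hceq⟩ := exists_hasDerivAt_eq_slope δ (fun x => F (δ x)) hlt
      (fun s hs => (hode s (le_trans ht hs.1)).continuousAt.continuousWithinAt)
      (fun x hx => hode x (le_trans ht hx.1.le))
    refine ⟨c, hc, ?_⟩
    rw [hceq]
    simp
  choose! c hc1 hc2 using key
  have hctop : Tendsto c atTop atTop := by
    apply tendsto_atTop_mono' atTop (_ : ∀ᶠ t in atTop, t ≤ c t) tendsto_id
    filter_upwards [eventually_ge_atTop (0:ℝ)] with t ht
    exact (hc1 t ht).1.le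
  have h1 : Tendsto (fun t => F (δ (c t))) atTop (nhds (F L)) :=
    (F_cont.continuousAt.tendsto).comp (hL.comp hctop)
  have h2 : Tendsto (fun t => δ (t+1) - δ t) atTop (nhds (L - L)) := by
    refine Tendsto.sub ?_ hL
    exact hL.comp (tendsto_atTop_add_const_right atTop 1 tendsto_id)
  rw [sub_self] at h2
  have heq : (fun t => F (δ (c t))) =ᶠ[atTop] (fun t => δ (t+1) - δ t) := by
    filter_upwards [eventually_ge_atTop (0:ℝ)] with t ht
    exact hc2 t ht
  exact tendsto_nhds_unique (h1.congr' heq) h2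

end Sol

/-- A function antitone on `[0,∞)` and bounded below by `0` there tends to its infimum. -/
lemma tendsto_sInf_of_antitone {δ : ℝ → ℝ}
    (hmono : ∀ ⦃s t : ℝ⦄, 0 ≤ s → s ≤ t → δ t ≤ δ s)
    (hlb : ∀ t ≥ (0:ℝ), 0 ≤ δ t) :
    Tendsto δ atTop (nhds (sInf (δ '' Ici 0))) := by
  set L := sInf (δ '' Ici 0) with hLdef
  have hne : (δ '' Ici 0).Nonempty := ⟨δ 0, mem_image_of_mem _ Set.self_mem_Ici⟩
  have hbd : BddBelow (δ '' Ici 0) := by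
    refine ⟨0, ?_⟩
    rintro y ⟨t, ht, rfl⟩
    exact hlb t ht
  rw [Metric.tendsto_atTop]
  intro ε hε
  obtain ⟨y, hy, hyL⟩ := Real.lt_sInf_add_pos hne hε
  obtain ⟨t₀, ht₀, rfl⟩ := hy
  refine ⟨t₀, fun t ht => ?_⟩
  have h1 : L ≤ δ t := csInf_le hbd (mem_image_of_mem _ (le_trans ht₀ ht))
  have h2 : δ t ≤ δ t₀ := hmono ht₀ ht
  rw [Real.dist_eq, abs_lt]
  constructor <;> linarith

end KuramotoAux

open KuramotoAux

/-- Asymptotics of the scalar ODE `δ̇ = (2/3) sin δ (1/2 - cos δ)` with `δ(0) = δ₀ ∈ [0,π]`: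
if `δ₀ ∈ [0,π/3)` then `δ(t) → 0`; if `δ₀ = π/3` then `δ ≡ π/3`; if `δ₀ ∈ (π/3,π]` then
`δ(t) → π`. -/
theorem kuramoto_three_oscillators_example (δ : ℝ → ℝ) (δ₀ : ℝ)
    (h0 : δ 0 = δ₀) (hδ₀ : δ₀ ∈ Set.Icc (0:ℝ) π)
    (hode : ∀ t ≥ (0:ℝ),
      HasDerivAt δ ((2/3) * Real.sin (δ t) * (1/2 - Real.cos (δ t))) t) :
    (δ₀ ∈ Set.Ico (0:ℝ) (π/3) → Tendsto δ atTop (nhds 0)) ∧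
    (δ₀ = π/3 → ∀ t ≥ (0:ℝ), δ t = π/3) ∧
    (δ₀ ∈ Set.Ioc (π/3) π → Tendsto δ atTop (nhds π)) := by
  have hode' : ∀ t ≥ (0:ℝ), HasDerivAt δ (F (δ t)) t := hode
  have hπ : (0:ℝ) < π := Real.pi_pos
  refine ⟨?_, ?_, ?_⟩
  · -- case δ₀ ∈ [0, π/3)
    rintro ⟨hge, hlt⟩
    rcases eq_or_lt_of_le hge with heq | hpos
    · -- δ₀ = 0 : constant solution
      have hconst := eq_const_forward hode' F_zero (by rw [h0, ← heq])
      have : δ =ᶠ[atTop] (fun _ => (0:ℝ)) := by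
        filter_upwards [eventually_ge_atTop (0:ℝ)] with t ht
        exact hconst t ht
      exact Tendsto.congr' this.symm tendsto_const_nhds
    · -- 0 < δ₀ < π/3
      have hup : ∀ t ≥ (0:ℝ), 0 < δ t := stays_above hode' F_zero (by rw [h0]; exact hpos)
      have hdown : ∀ t ≥ (0:ℝ), δ t < π/3 :=
        stays_below hode' F_pi_div_three (by rw [h0]; exact hlt)
      -- derivative negative on (0,∞)
      have hanti : StrictAntiOn δ (Ici 0) := by
        apply strictAntiOn_of_deriv_neg (convex_Ici 0) (contOn hode')
        intro x hx
        rw [interior_Ici] at hx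
        have hx0 : (0:ℝ) ≤ x := hx.le
        rw [(hode' x hx0).deriv]
        have hs : 0 < Real.sin (δ x) :=
          Real.sin_pos_of_pos_of_lt_pi (hup x hx0) (lt_trans (hdown x hx0) (by linarith))
        have hcgt : Real.cos (π/3) < Real.cos (δ x) :=
          Real.cos_lt_cos_of_nonneg_of_le_pi (hup x hx0).le (by linarith) (hdown x hx0)
        rw [Real.cos_pi_div_three] at hcgt
        unfold F
        nlinarith
      have hmono : ∀ ⦃s t : ℝ⦄, 0 ≤ s → s ≤ t → δ t ≤ δ s := by
        intro s t hs hst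
        exact hanti.antitoneOn hs (le_trans hs hst) hst
      have hlb : ∀ t ≥ (0:ℝ), 0 ≤ δ t := fun t ht => (hup t ht).le
      have hL := tendsto_sInf_of_antitone hmono hlb
      set L := sInf (δ '' Ici 0) with hLdef
      have hFL : F L = 0 := F_limit_eq_zero hode' hL
      have hbd : BddBelow (δ '' Ici 0) := by
        refine ⟨0, ?_⟩; rintro y ⟨t, ht, rfl⟩; exact hlb t ht
      have hL0 : 0 ≤ L := by
        apply le_csInf ⟨δ 0, mem_image_of_mem _ Set.self_mem_Ici⟩
        rintro y ⟨t, ht, rfl⟩; exact hlb t ht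
      have hLδ₀ : L ≤ δ₀ := by
        rw [← h0]; exact csInf_le hbd (mem_image_of_mem _ Set.self_mem_Ici)
      have hLlt : L < π/3 := lt_of_le_of_lt hLδ₀ hlt
      -- F L = 0 and L ∈ [0, π/3) forces L = 0
      have hLzero : L = 0 := by
        by_contra hne
        have hLpos : 0 < L := lt_of_le_of_ne hL0 (Ne.symm hne)
        have hs : 0 < Real.sin L := Real.sin_pos_of_pos_of_lt_pi hLpos (by linarith)
        have hcgt : Real.cos (π/3) < Real.cos L :=
          Real.cos_lt_cos_of_nonneg_of_le_pi hL0 (by linarith) hLlt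
        rw [Real.cos_pi_div_three] at hcgt
        unfold F at hFL
        nlinarith
      rw [hLzero] at hL
      exact hL
  · -- case δ₀ = π/3 : constant solution
    intro hpi3
    exact eq_const_forward hode' F_pi_div_three (by rw [h0, hpi3])
  · -- case δ₀ ∈ (π/3, π]
    rintro ⟨hgt, hle⟩
    rcases eq_or_lt_of_le hle with heq | hlt
    · -- δ₀ = π : constant solution
      have hconst := eq_const_forward hode' F_pi (by rw [h0, heq])
      have : δ =ᶠ[atTop] (fun _ => π) := by
        filter_upwards [eventually_ge_atTop (0:ℝ)] with t ht
        exact hconst t ht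
      exact Tendsto.congr' this.symm tendsto_const_nhds
    · -- π/3 < δ₀ < π
      have hup : ∀ t ≥ (0:ℝ), π/3 < δ t :=
        stays_above hode' F_pi_div_three (by rw [h0]; exact hgt)
      have hdown : ∀ t ≥ (0:ℝ), δ t < π := stays_below hode' F_pi (by rw [h0]; exact hlt)
      have hmonoS : StrictMonoOn δ (Ici 0) := by
        apply strictMonoOn_of_deriv_pos (convex_Ici 0) (contOn hode')
        intro x hx
        rw [interior_Ici] at hx
        have hx0 : (0:ℝ) ≤ x := hx.le
        rw [(hode' x hx0).deriv]
        have hs : 0 < Real.sin (δ x) :=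
          Real.sin_pos_of_pos_of_lt_pi (lt_trans (by linarith) (hup x hx0)) (hdown x hx0)
        have hclt : Real.cos (δ x) < Real.cos (π/3) :=
          Real.cos_lt_cos_of_nonneg_of_le_pi (by linarith) (hdown x hx0).le (hup x hx0)
        rw [Real.cos_pi_div_three] at hclt
        unfold F
        nlinarith
      -- apply the antitone convergence lemma to g = π - δ
      set g : ℝ → ℝ := fun t => π - δ t with hgdef
      have hmono : ∀ ⦃s t : ℝ⦄, 0 ≤ s → s ≤ t → g t ≤ g s := by
        intro s t hs hst
        have : δ s ≤ δ t := hmonoS.monotoneOn hs (le_trans hs hst) hst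
        simp only [hgdef]; linarith
      have hlb : ∀ t ≥ (0:ℝ), 0 ≤ g t := by
        intro t ht; simp only [hgdef]; linarith [hdown t ht]
      have hgL := tendsto_sInf_of_antitone hmono hlb
      set L' := sInf (g '' Ici 0) with hL'def
      have hδL : Tendsto δ atTop (nhds (π - L')) := by
        have := (tendsto_const_nhds (x := π) (f := atTop)).sub hgL
        refine this.congr ?_
        intro t; simp [hgdef]
      set L := π - L' with hLdef
      have hFL : F L = 0 := F_limit_eq_zero hode' hδL
      have hbd : BddBelow (g '' Ici 0) := by
        refine ⟨0, ?_⟩; rintro y ⟨t, ht, rfl⟩; exact hlb t ht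
      have hL'0 : 0 ≤ L' := by
        apply le_csInf ⟨g 0, mem_image_of_mem _ Set.self_mem_Ici⟩
        rintro y ⟨t, ht, rfl⟩; exact hlb t ht
      have hL'le : L' ≤ g 0 := csInf_le hbd (mem_image_of_mem _ Set.self_mem_Ici)
      have hg0 : g 0 = π - δ₀ := by simp [hgdef, h0]
      have hLgt : π/3 < L := by
        simp only [hLdef]
        rw [hg0] at hL'le
        linarith
      have hLle : L ≤ π := by simp only [hLdef]; linarith
      -- F L = 0 and L ∈ (π/3, π] forces L = π
      have hLpi : L = π := by
        by_contra hne
        have hLlt : L < π := lt_of_le_of_ne hLle hne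
        have hs : 0 < Real.sin L := Real.sin_pos_of_pos_of_lt_pi (by linarith) hLlt
        have hclt : Real.cos L < Real.cos (π/3) :=
          Real.cos_lt_cos_of_nonneg_of_le_pi (by linarith) hLlt.le hLgt
        rw [Real.cos_pi_div_three] at hclt
        unfold F at hFL
        nlinarith
      rw [hLpi] at hδL
      exact hδL
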